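/- For every computably enumerable set A and every constant c, the class of oracles {X ∈ 2^ℕ | ∀n, K^X(A↾n) ≤ K(n) + c} is a Π^0_2 class. -/

import Mathlib

open scoped Classical ENNReal

namespace KCE

/-- Binary strings. -/
abbrev Str := List Bool

/-- The first `n` bits of (the characteristic sequence of) a set `A ⊆ ℕ`. -/
noncomputable def seg (A : Set ℕ) (n : ℕ) : Str :=
  (List.range n).map fun i => decide (i ∈ A)

/-- A set of strings is prefix-free if no element is a proper prefix of another. -/
def PrefixFree (D : Set Str) : Prop :=
  ∀ σ ∈ D, ∀ τ ∈ D, σ <+: τ → σ = τ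

/-- A prefix-free machine: a partial computable map on binary strings
with prefix-free domain. -/
def PFMachine (M : Str →. Str) : Prop :=
  Partrec M ∧ PrefixFree M.Dom

/-- The Kolmogorov complexity of `σ` with respect to machine `M`:
the least length of an `M`-description of `σ` (`⊤` if there is none). -/
noncomputable def Kof (M : Str →. Str) (σ : Str) : ℕ∞ :=
  sInf {n : ℕ∞ | ∃ τ : Str, σ ∈ M τ ∧ (τ.length : ℕ∞) = n}

/-- `U` is an optimal prefix-free machine. -/
def OptimalPF (U : Str →. Str) : Prop :=
  PFMachine U ∧ ∀ M : Str →. Str, PFMachine M → ∃ c : ℕ, ∀ σ, Kof U σ ≤ Kof M σ + (c : ℕ∞)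

/-- `K(n)`: the complexity of the string of `n` zeros. -/
noncomputable def KNum (U : Str →. Str) (n : ℕ) : ℕ∞ :=
  Kof U (List.replicate n false)

/-- `A` is `K`-trivial (w.r.t. the universal machine `U`). -/
def KTrivial (U : Str →. Str) (A : Set ℕ) : Prop :=
  ∃ c : ℕ, ∀ n, Kof U (seg A n) ≤ KNum U n + (c : ℕ∞)

/-- `X ≤_K Y`: the initial segment complexity of `X` is bounded by that of `Y`. -/
def KLe (U : Str →. Str) (X Y : Set ℕ) : Prop :=
  ∃ c : ℕ, ∀ n, Kof U (seg X n) ≤ Kof U (seg Y n) + (c : ℕ∞)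

/-- A set is computably enumerable if it is the domain of a partial computable
function. -/
def CE {α : Type} [Primcodable α] (S : Set α) : Prop :=
  ∃ f : α →. Unit, Partrec f ∧ ∀ a, a ∈ S ↔ (f a).Dom

/-- `A` is `Δ⁰₂`: it has a computable approximation. -/
def Delta02 (A : Set ℕ) : Prop :=
  ∃ g : ℕ → ℕ → Bool, Computable₂ g ∧ ∀ n, ∃ s₀, ∀ s ≥ s₀, (g n s = true ↔ n ∈ A)

/-- `ρ` is an initial segment of (the characteristic sequence of) `X`. -/
def Agrees (X : Set ℕ) (ρ : Str) : Prop :=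
  ρ = seg X ρ.length

/-- An oracle machine is given by a c.e. set of axioms
`(oracle prefix, program, output)`.  `OracleDescribes W X τ σ` says that on
oracle `X` the machine outputs `σ` on program `τ`. -/
def OracleDescribes (W : Set (Str × Str × Str)) (X : Set ℕ) (τ σ : Str) : Prop :=
  ∃ ρ : Str, Agrees X ρ ∧ (ρ, τ, σ) ∈ W

/-- An oracle prefix-free machine: the axiom set is c.e., for every oracle the
domain is prefix-free, and the computed map is single-valued. -/
def OraclePFMachine (W : Set (Str × Str × Str)) : Prop :=
  CE W ∧
  (∀ X : Set ℕ, PrefixFree {τ | ∃ σ, OracleDescribes W X τ σ}) ∧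
  (∀ (X : Set ℕ) (τ σ₁ σ₂ : Str),
      OracleDescribes W X τ σ₁ → OracleDescribes W X τ σ₂ → σ₁ = σ₂)

/-- `K^X(σ)` with respect to the oracle machine `W`. -/
noncomputable def KofO (W : Set (Str × Str × Str)) (X : Set ℕ) (σ : Str) : ℕ∞ :=
  sInf {n : ℕ∞ | ∃ τ : Str, OracleDescribes W X τ σ ∧ (τ.length : ℕ∞) = n}

/-- `W` is an optimal oracle prefix-free machine. -/
def OptimalOraclePF (W : Set (Str × Str × Str)) : Prop :=
  OraclePFMachine W ∧
  ∀ W' : Set (Str × Str × Str), OraclePFMachine W' →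
    ∃ c : ℕ, ∀ (X : Set ℕ) (σ : Str), KofO W X σ ≤ KofO W' X σ + (c : ℕ∞)

/-- `X ≤_LK Y`: oracle `Y` compresses at least as well as oracle `X`. -/
def LKLe (W : Set (Str × Str × Str)) (X Y : Set ℕ) : Prop :=
  ∃ c : ℕ, ∀ σ : Str, KofO W Y σ ≤ KofO W X σ + (c : ℕ∞)

/-- `X ≤_LK ∅`: `X` is low for `K`. -/
def LowForK (U : Str →. Str) (W : Set (Str × Str × Str)) (X : Set ℕ) : Prop :=
  ∃ c : ℕ, ∀ σ : Str, Kof U σ ≤ KofO W X σ + (c : ℕ∞)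

/-- A `Π⁰₂` class of reals. -/
def Pi02Class (P : Set (Set ℕ)) : Prop :=
  ∃ R : Str → ℕ → Bool, Computable₂ R ∧ P = {X : Set ℕ | ∀ n, ∃ m, R (seg X m) n = true}

/-- A `Π⁰₁` class of reals. -/
def Pi01Class (P : Set (Set ℕ)) : Prop :=
  ∃ R : Str → Bool, Computable R ∧ P = {X : Set ℕ | ∀ n, R (seg X n) = true}

/-- A class of reals is perfect if it is nonempty and has no isolated points
(in the Cantor space topology). -/
def PerfectClass (P : Set (Set ℕ)) : Prop :=
  P.Nonempty ∧ ∀ X ∈ P, ∀ n : ℕ, ∃ Y ∈ P, Y ≠ X ∧ seg Y n = seg X n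

/-- The basic cylinder determined by a string. -/
def cyl (ρ : Str) : Set (Set ℕ) := {X : Set ℕ | Agrees X ρ}

/-- The weight of a set of strings: `∑ 2^{-|ρ|}`. -/
noncomputable def wgt (S : Set Str) : ℝ≥0∞ :=
  ∑' ρ : S, ((2 : ℝ≥0∞)⁻¹) ^ (ρ : Str).length

/-- A class of reals is null (w.r.t. the uniform measure on Cantor space). -/
def NullClass (P : Set (Set ℕ)) : Prop :=
  ∀ k : ℕ, ∃ S : Set Str, (P ⊆ ⋃ ρ ∈ S, cyl ρ) ∧ wgt S ≤ ((2 : ℝ≥0∞)⁻¹) ^ k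

/-- `X` is weakly 2-random: it belongs to no null `Π⁰₂` class. -/
def Weakly2Random (X : Set ℕ) : Prop :=
  ∀ P : Set (Set ℕ), Pi02Class P → NullClass P → X ∉ P

/-- The halting problem `∅'`. -/
def halting : Set ℕ :=
  {n | ((Denumerable.ofNat Nat.Partrec.Code n).eval n).Dom}

/-- `X` is truth-table reducible to `∅'`: `X = Φ^{∅'}` for a Turing functional
`Φ` (given by a c.e., consistent set of axioms) that is total on every oracle. -/
def TTBelowHalting (X : Set ℕ) : Prop :=
  ∃ V : Set (Str × ℕ × Bool), CE V ∧
    (∀ (Y : Set ℕ) (n : ℕ), ∃ ρ b, Agrees Y ρ ∧ (ρ, n, b) ∈ V) ∧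
    (∀ (Y : Set ℕ) (n : ℕ) (b₁ b₂ : Bool),
        (∃ ρ, Agrees Y ρ ∧ (ρ, n, b₁) ∈ V) → (∃ ρ, Agrees Y ρ ∧ (ρ, n, b₂) ∈ V) → b₁ = b₂) ∧
    (∀ n, n ∈ X ↔ ∃ ρ, Agrees halting ρ ∧ (ρ, n, true) ∈ V)

/-- `g` is computable in the oracle `O`: some oracle Turing functional, given by
a c.e. set of axioms, computes exactly `g` along `O`. -/
def ComputableIn (O : Set ℕ) (g : ℕ → Bool) : Prop :=
  ∃ V : Set (Str × ℕ × Bool), CE V ∧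
    ∀ (n : ℕ) (b : Bool), ((∃ ρ, Agrees O ρ ∧ (ρ, n, b) ∈ V) ↔ g n = b)

/-- A family `F` of subsets of `ℕ` is uniformly computable in `∅'`. -/
def UnifHaltingComputable (F : Set (Set ℕ)) : Prop :=
  ∃ f : ℕ → ℕ → Bool,
    ComputableIn halting (fun m => f m.unpair.1 m.unpair.2) ∧
    F = {S : Set ℕ | ∃ i : ℕ, S = {n : ℕ | f i n = true}}

/-- `V` is an optimal plain (not necessarily prefix-free) machine. -/
def OptimalPlain (V : Str →. Str) : Prop :=
  Partrec V ∧ ∀ M : Str →. Str, Partrec M → ∃ c : ℕ, ∀ σ, Kof V σ ≤ Kof M σ + (c : ℕ∞)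

/-- `X` is `C`-trivial (w.r.t. the optimal plain machine `V`). -/
def CTrivial (V : Str →. Str) (X : Set ℕ) : Prop :=
  ∃ c : ℕ, ∀ n, Kof V (seg X n) ≤ Kof V (List.replicate n false) + (c : ℕ∞)

/-- `X ≤_C Y` (w.r.t. the optimal plain machine `V`). -/
def CLe (V : Str →. Str) (X Y : Set ℕ) : Prop :=
  ∃ c : ℕ, ∀ n, Kof V (seg X n) ≤ Kof V (seg Y n) + (c : ℕ∞)


/-! ### Auxiliary material for Statement 2 -/

section Statement2Aux

open Nat.Partrec (Code)
open Nat.Partrec.Code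

/-- The string of `n` zeros, in a `Primrec`-friendly form. -/
def zeros (n : ℕ) : Str := (List.range n).map fun _ => false

lemma zeros_eq (n : ℕ) : zeros n = List.replicate n false := by
  simp [zeros, List.eq_replicate_iff]

/-- A `Primrec`-friendly version of `List.take`. -/
def takeStr (s : Str) (k : ℕ) : Str :=
  (List.range (min k s.length)).map fun i => s.getD i false

lemma takeStr_eq (s : Str) (k : ℕ) : takeStr s k = s.take k := by
  apply List.ext_getElem
  · simp [takeStr]
  · intro i h1 h2
    have hi : i < s.length := by
      simp only [takeStr, List.length_map, List.length_range] at h1; omega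
    simp [takeStr, List.getD_eq_getElem _ _ hi, List.getElem?_eq_getElem hi]

/-- Stage-`t` approximation to the first `n` bits of the set enumerated by
the code `cA`. -/
def abits (cA : Code) (t n : ℕ) : Str :=
  (List.range n).map fun i => (evaln t cA i).isSome

/-- The single-witness check used in the third disjunct of `Rcheck`. -/
def hit (cW cA : Code) (c : ℕ) (s : Str) (n t' dl w : ℕ) : Bool :=
  (evaln s.length cW w).isSome &&
    ((Encodable.decode (α := Str × Str × Str) w).casesOn false fun x =>
      decide (x.1 = takeStr s x.1.length) && decide (x.2.2 = abits cA t' n) &&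
      decide (x.2.1.length ≤ dl + c))

lemma hit_iff {cW cA : Code} {c : ℕ} {s : Str} {n t' dl w : ℕ} :
    hit cW cA c s n t' dl w = true ↔
      ((evaln s.length cW w).isSome = true ∧
        ∃ x : Str × Str × Str, Encodable.decode w = some x ∧
          x.1 = takeStr s x.1.length ∧ x.2.2 = abits cA t' n ∧
          x.2.1.length ≤ dl + c) := by
  unfold hit
  rcases h : (Encodable.decode (α := Str × Str × Str) w) with _ | x
  · simp
  · simp [and_assoc]

/-- The `Π⁰₂` matrix. -/
def Rcheck (cU cA cW : Code) (c : ℕ) (s : Str) (e : ℕ) : Bool :=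
  (!decide (evaln e.unpair.2.unpair.1 cU e.unpair.1.unpair.2 =
      some (Encodable.encode (zeros e.unpair.1.unpair.1)))) ||
  ((decide (e.unpair.2.unpair.2 ≤ s.length) &&
      !decide (abits cA s.length e.unpair.1.unpair.1 =
        abits cA e.unpair.2.unpair.2 e.unpair.1.unpair.1)) ||
    (List.range (s.length + 1)).any
      (hit cW cA c s e.unpair.1.unpair.1 e.unpair.2.unpair.2
        ((Encodable.decode (α := Str) e.unpair.1.unpair.2).casesOn 0 List.length)))

lemma Rcheck_iff {cU cA cW : Code} {c : ℕ} {s : Str} {e : ℕ} :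
    Rcheck cU cA cW c s e = true ↔
      (¬ evaln e.unpair.2.unpair.1 cU e.unpair.1.unpair.2 =
          some (Encodable.encode (zeros e.unpair.1.unpair.1))) ∨
      ((e.unpair.2.unpair.2 ≤ s.length ∧
          ¬ abits cA s.length e.unpair.1.unpair.1 =
            abits cA e.unpair.2.unpair.2 e.unpair.1.unpair.1) ∨
        ∃ w, w < s.length + 1 ∧
          ((evaln s.length cW w).isSome = true ∧
            ∃ x : Str × Str × Str, Encodable.decode w = some x ∧
              x.1 = takeStr s x.1.length ∧
              x.2.2 = abits cA e.unpair.2.unpair.2 e.unpair.1.unpair.1 ∧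
              x.2.1.length ≤
                ((Encodable.decode (α := Str) e.unpair.1.unpair.2).casesOn 0
                  List.length) + c)) := by
  unfold Rcheck
  simp only [Bool.or_eq_true, Bool.and_eq_true, Bool.not_eq_true',
    decide_eq_false_iff_not, decide_eq_true_eq, List.any_eq_true, List.mem_range,
    hit_iff]

lemma foldl_or {β : Type} (p : β → Bool) :
    ∀ (l : List β) (b : Bool), l.foldl (fun r x => r || p x) b = (b || l.any p)
  | [], b => by simp
  | x :: l, b => by simp [foldl_or p l, Bool.or_assoc]

theorem primrec_list_any {α β : Type} [Primcodable α] [Primcodable β]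
    {f : α → List β} {p : α → β → Bool} (hf : Primrec f) (hp : Primrec₂ p) :
    Primrec fun a => (f a).any (p a) :=
  (Primrec.list_foldl hf (Primrec.const false)
    ((Primrec.or.comp (Primrec.fst.comp Primrec.snd)
        (hp.comp Primrec.fst (Primrec.snd.comp Primrec.snd))).to₂)).of_eq
    fun a => by
      show List.foldl (fun r x => r || p a x) false (f a) = (f a).any (p a)
      rw [foldl_or]; simp

lemma primrec_evalnc (cc : Code) : Primrec₂ fun (t x : ℕ) => evaln t cc x :=
  primrec_evaln.comp ((Primrec.fst.pair (Primrec.const cc)).pair Primrec.snd)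

lemma primrec_abits (cA : Code) : Primrec₂ (abits cA) :=
  Primrec.list_map (Primrec.list_range.comp Primrec.snd)
    ((Primrec.option_isSome.comp
      ((primrec_evalnc cA).comp (Primrec.fst.comp Primrec.fst) Primrec.snd)).to₂)

lemma primrec_takeStr : Primrec₂ takeStr :=
  Primrec.list_map
    (Primrec.list_range.comp
      (Primrec.nat_min.comp Primrec.snd (Primrec.list_length.comp Primrec.fst)))
    (((Primrec.list_getD false).comp (Primrec.fst.comp Primrec.fst) Primrec.snd).to₂)

lemma primrec_zeros : Primrec zeros :=
  Primrec.list_map Primrec.list_range (((Primrec.const false).comp Primrec.snd).to₂)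

lemma primrec_Rcheck (cU cA cW : Code) (c : ℕ) : Primrec₂ (Rcheck cU cA cW c) := by
  have hs : Primrec fun q : Str × ℕ => q.1 := Primrec.fst
  have hup1 : Primrec fun q : Str × ℕ => q.2.unpair.1.unpair :=
    Primrec.unpair.comp (Primrec.fst.comp (Primrec.unpair.comp Primrec.snd))
  have hup2 : Primrec fun q : Str × ℕ => q.2.unpair.2.unpair :=
    Primrec.unpair.comp (Primrec.snd.comp (Primrec.unpair.comp Primrec.snd))
  have hn : Primrec fun q : Str × ℕ => q.2.unpair.1.unpair.1 := Primrec.fst.comp hup1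
  have hd : Primrec fun q : Str × ℕ => q.2.unpair.1.unpair.2 := Primrec.snd.comp hup1
  have ht : Primrec fun q : Str × ℕ => q.2.unpair.2.unpair.1 := Primrec.fst.comp hup2
  have ht' : Primrec fun q : Str × ℕ => q.2.unpair.2.unpair.2 := Primrec.snd.comp hup2
  have hm : Primrec fun q : Str × ℕ => q.1.length := Primrec.list_length.comp Primrec.fst
  have hdisj1 : Primrec fun q : Str × ℕ =>
      (!decide (evaln q.2.unpair.2.unpair.1 cU q.2.unpair.1.unpair.2 =
        some (Encodable.encode (zeros q.2.unpair.1.unpair.1)))) :=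
    Primrec.not.comp (Primrec.eq.comp ((primrec_evalnc cU).comp ht hd)
      (Primrec.option_some.comp (Primrec.encode.comp (primrec_zeros.comp hn)))).decide
  have hdisj2 : Primrec fun q : Str × ℕ =>
      (decide (q.2.unpair.2.unpair.2 ≤ q.1.length) &&
        !decide (abits cA q.1.length q.2.unpair.1.unpair.1 =
          abits cA q.2.unpair.2.unpair.2 q.2.unpair.1.unpair.1)) :=
    Primrec.and.comp (Primrec.nat_le.comp ht' hm).decide
      (Primrec.not.comp (Primrec.eq.comp ((primrec_abits cA).comp hm hn)
        ((primrec_abits cA).comp ht' hn)).decide)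
  have hdl : Primrec fun q : Str × ℕ =>
      (((Encodable.decode (α := Str) q.2.unpair.1.unpair.2).casesOn 0 List.length : ℕ)) :=
    Primrec.option_casesOn (Primrec.decode.comp hd) (Primrec.const 0)
      ((Primrec.list_length.comp Primrec.snd).to₂)
  have hq1 : Primrec fun r : (Str × ℕ) × ℕ => (evaln r.1.1.length cW r.2).isSome :=
    Primrec.option_isSome.comp
      ((primrec_evalnc cW).comp (hm.comp Primrec.fst) Primrec.snd)
  have hinner : Primrec fun r : (Str × ℕ) × ℕ =>
      (((Encodable.decode (α := Str × Str × Str) r.2).casesOn false fun x =>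
        decide (x.1 = takeStr r.1.1 x.1.length) &&
        decide (x.2.2 = abits cA r.1.2.unpair.2.unpair.2 r.1.2.unpair.1.unpair.1) &&
        decide (x.2.1.length ≤
          ((Encodable.decode (α := Str) r.1.2.unpair.1.unpair.2).casesOn 0
            List.length) + c)) : Bool) := by
    have hρ : Primrec fun u : ((Str × ℕ) × ℕ) × (Str × Str × Str) => u.2.1 :=
      Primrec.fst.comp Primrec.snd
    have hτ : Primrec fun u : ((Str × ℕ) × ℕ) × (Str × Str × Str) => u.2.2.1 :=
      Primrec.fst.comp (Primrec.snd.comp Primrec.snd)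
    have hσ : Primrec fun u : ((Str × ℕ) × ℕ) × (Str × Str × Str) => u.2.2.2 :=
      Primrec.snd.comp (Primrec.snd.comp Primrec.snd)
    have hss : Primrec fun u : ((Str × ℕ) × ℕ) × (Str × Str × Str) => u.1.1.1 :=
      Primrec.fst.comp (Primrec.fst.comp Primrec.fst)
    have hbase : Primrec fun u : ((Str × ℕ) × ℕ) × (Str × Str × Str) => u.1.1 :=
      Primrec.fst.comp Primrec.fst
    have hA : Primrec fun u : ((Str × ℕ) × ℕ) × (Str × Str × Str) =>
        decide (u.2.1 = takeStr u.1.1.1 u.2.1.length) :=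
      Primrec.eq.comp hρ
        (primrec_takeStr.comp hss (Primrec.list_length.comp hρ)) |>.decide
    have hB : Primrec fun u : ((Str × ℕ) × ℕ) × (Str × Str × Str) =>
        decide (u.2.2.2 = abits cA u.1.1.2.unpair.2.unpair.2 u.1.1.2.unpair.1.unpair.1) :=
      Primrec.eq.comp hσ
        ((primrec_abits cA).comp (ht'.comp hbase) (hn.comp hbase)) |>.decide
    have hC : Primrec fun u : ((Str × ℕ) × ℕ) × (Str × Str × Str) =>
        decide (u.2.2.1.length ≤
          ((Encodable.decode (α := Str) u.1.1.2.unpair.1.unpair.2).casesOn 0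
            List.length) + c) :=
      Primrec.nat_le.comp (Primrec.list_length.comp hτ)
        (Primrec.nat_add.comp (hdl.comp hbase) (Primrec.const c)) |>.decide
    exact Primrec.option_casesOn (Primrec.decode.comp Primrec.snd)
      (Primrec.const false)
      ((Primrec.and.comp (Primrec.and.comp hA hB) hC).to₂)
  have hdisj3 : Primrec fun q : Str × ℕ =>
      (List.range (q.1.length + 1)).any
        (hit cW cA c q.1 q.2.unpair.1.unpair.1 q.2.unpair.2.unpair.2
          ((Encodable.decode (α := Str) q.2.unpair.1.unpair.2).casesOn 0 List.length)) := by
    refine primrec_list_any (Primrec.list_range.comp (Primrec.succ.comp hm)) ?_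
    exact ((Primrec.and.comp hq1 hinner).to₂)
  exact (Primrec.or.comp hdisj1 (Primrec.or.comp hdisj2 hdisj3)).to₂

/-! Basic facts relating codes and partial computable functions. -/

lemma codeG1 {α β : Type} [Primcodable α] [Primcodable β] {f : α →. β} {cf : Code}
    (hcf : ∀ n, eval cf n =
      Part.bind (Encodable.decode (α := α) n) fun a => (f a).map Encodable.encode)
    (a : α) (b : β) (hb : b ∈ f a) :
    ∃ t, evaln t cf (Encodable.encode a) = some (Encodable.encode b) := by
  have hmem : Encodable.encode b ∈ eval cf (Encodable.encode a) := by
    rw [hcf]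
    refine Part.mem_bind_iff.2 ⟨a, ?_, Part.mem_map _ hb⟩
    simp [Part.mem_ofOption, Encodable.encodek]
  obtain ⟨t, ht⟩ := evaln_complete.1 hmem
  exact ⟨t, ht⟩

lemma codeG2 {α β : Type} [Primcodable α] [Primcodable β] {f : α →. β} {cf : Code}
    (hcf : ∀ n, eval cf n =
      Part.bind (Encodable.decode (α := α) n) fun a => (f a).map Encodable.encode)
    (w y t : ℕ) (h : evaln t cf w = some y) :
    ∃ a, Encodable.decode (α := α) w = some a ∧
      ∃ b, b ∈ f a ∧ y = Encodable.encode b := by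
  have hy : y ∈ eval cf w := evaln_sound h
  rw [hcf] at hy
  obtain ⟨a, ha, hb⟩ := Part.mem_bind_iff.1 hy
  obtain ⟨b, hbf, hbe⟩ := (Part.mem_map_iff _).1 hb
  exact ⟨a, by simpa [Part.mem_ofOption] using ha, b, hbf, hbe.symm⟩

/-! Facts about `seg`. -/

lemma seg_length (X : Set ℕ) (n : ℕ) : (seg X n).length = n := by simp [seg]

lemma seg_take (X : Set ℕ) {a b : ℕ} (h : a ≤ b) : (seg X b).take a = seg X a := by
  unfold seg
  rw [← List.map_take, List.take_range, Nat.min_eq_left h]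

lemma agrees_of_prefix {X : Set ℕ} {ρ : Str} {m : ℕ} (h : ρ <+: seg X m) :
    Agrees X ρ := by
  have hl : ρ.length ≤ m := by
    have := h.length_le
    rwa [seg_length] at this
  have heq := List.prefix_iff_eq_take.1 h
  exact heq.trans (seg_take X hl)

/-! Settling of the approximation `abits`. -/

lemma abits_settle (cA : Code) (A : Set ℕ)
    (hA : ∀ i, i ∈ A ↔ ∃ t, (evaln t cA i).isSome = true) (n : ℕ) :
    ∃ T, ∀ m, T ≤ m → abits cA m n = seg A n := by
  have hbit : ∀ i, ∃ T, ∀ m, T ≤ m → (evaln m cA i).isSome = decide (i ∈ A) := by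
    intro i
    by_cases hi : i ∈ A
    · obtain ⟨t, ht⟩ := (hA i).1 hi
      refine ⟨t, fun m hm => ?_⟩
      obtain ⟨y, hy⟩ := Option.isSome_iff_exists.1 ht
      have hym : y ∈ evaln m cA i := evaln_mono hm hy
      rw [decide_eq_true hi]
      exact Option.isSome_iff_exists.2 ⟨y, hym⟩
    · refine ⟨0, fun m _ => ?_⟩
      rw [decide_eq_false hi]
      by_contra hcon
      have : (evaln m cA i).isSome = true := by
        revert hcon; cases (evaln m cA i).isSome <;> simp
      exact hi ((hA i).2 ⟨m, this⟩)
  choose F hF using hbit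
  refine ⟨(Finset.range n).sup F, fun m hm => ?_⟩
  unfold abits seg
  apply List.map_congr_left
  intro i hi
  exact hF i m (le_trans (Finset.le_sup (Finset.mem_range.2 (List.mem_range.1 hi))) hm)

/-! An attainment lemma for `sInf` in `ℕ∞`. -/

lemma exists_of_sInf_le {S : Set ℕ∞} {N : ℕ} (h : sInf S ≤ (N : ℕ∞)) :
    ∃ x ∈ S, x ≤ (N : ℕ∞) := by
  by_contra hc
  push_neg at hc
  have h1 : (N : ℕ∞) + 1 ≤ sInf S :=
    le_sInf fun x hx => ENat.add_one_le_iff (by simp) |>.2 (hc x hx)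
  have h2 : (N : ℕ∞) + 1 ≤ (N : ℕ∞) := h1.trans h
  have h3 : (N : ℕ) + 1 ≤ N := by exact_mod_cast h2
  omega

lemma exists_desc_of_KofO_le {W : Set (Str × Str × Str)} {X : Set ℕ} {σ : Str} {N : ℕ}
    (h : KofO W X σ ≤ (N : ℕ∞)) :
    ∃ τ : Str, OracleDescribes W X τ σ ∧ τ.length ≤ N := by
  obtain ⟨x, hx, hxN⟩ := exists_of_sInf_le h
  obtain ⟨τ, hτ, rfl⟩ := hx
  exact ⟨τ, hτ, by exact_mod_cast hxN⟩

lemma exists_desc_of_Kof_le {M : Str →. Str} {σ : Str} {N : ℕ}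
    (h : Kof M σ ≤ (N : ℕ∞)) :
    ∃ τ : Str, σ ∈ M τ ∧ τ.length ≤ N := by
  obtain ⟨x, hx, hxN⟩ := exists_of_sInf_le h
  obtain ⟨τ, hτ, rfl⟩ := hx
  exact ⟨τ, hτ, by exact_mod_cast hxN⟩

lemma KofO_le_of_desc {W : Set (Str × Str × Str)} {X : Set ℕ} {τ σ : Str}
    (h : OracleDescribes W X τ σ) : KofO W X σ ≤ (τ.length : ℕ∞) :=
  sInf_le ⟨τ, h, rfl⟩

lemma Kof_le_of_desc {M : Str →. Str} {τ σ : Str} (h : σ ∈ M τ) :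
    Kof M σ ≤ (τ.length : ℕ∞) :=
  sInf_le ⟨τ, h, rfl⟩

end Statement2Aux

open Nat.Partrec.Code in
/-- For every c.e. set `A` and constant `c`, the class
`{X | ∀ n, K^X(A↾n) ≤ K(n) + c}` is a `Π⁰₂` class. -/
theorem pi02Class_bounded_oracle_complexity
    (U : Str →. Str) (hU : OptimalPF U)
    (W : Set (Str × Str × Str)) (hW : OptimalOraclePF W)
    (A : Set ℕ) (hA : CE A) (c : ℕ) :
    Pi02Class {X : Set ℕ | ∀ n : ℕ, KofO W X (seg A n) ≤ KNum U n + (c : ℕ∞)} := by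
  classical
  obtain ⟨fW, hfWpr, hfW⟩ := hW.1.1
  obtain ⟨fA, hfApr, hfA⟩ := hA
  have hUpr : Partrec U := hU.1.1
  obtain ⟨cU, hcU⟩ := Nat.Partrec.Code.exists_code.1 hUpr
  obtain ⟨cA, hcA⟩ := Nat.Partrec.Code.exists_code.1 hfApr
  obtain ⟨cW, hcW⟩ := Nat.Partrec.Code.exists_code.1 hfWpr
  have hcU' : ∀ n, eval cU n =
      Part.bind (Encodable.decode (α := Str) n) fun a => (U a).map Encodable.encode :=
    fun n => congrFun hcU n
  have hcA' : ∀ n, eval cA n =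
      Part.bind (Encodable.decode (α := ℕ) n) fun a => (fA a).map Encodable.encode :=
    fun n => congrFun hcA n
  have hcW' : ∀ n, eval cW n =
      Part.bind (Encodable.decode (α := Str × Str × Str) n) fun a =>
        (fW a).map Encodable.encode :=
    fun n => congrFun hcW n
  -- the approximation to `A` is correct
  have hAiff : ∀ i, i ∈ A ↔ ∃ t, (evaln t cA i).isSome = true := by
    intro i
    constructor
    · intro hi
      obtain ⟨u, hu⟩ := Part.dom_iff_mem.1 ((hfA i).1 hi)
      obtain ⟨t, ht⟩ := codeG1 hcA' i u hu
      refine ⟨t, ?_⟩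
      have : Encodable.encode i = i := rfl
      rw [this] at ht
      simp [ht]
    · rintro ⟨t, ht⟩
      obtain ⟨y, hy⟩ := Option.isSome_iff_exists.1 ht
      obtain ⟨a, ha, u, hu, -⟩ := codeG2 hcA' i y t hy
      have hai : i = a := by simpa using ha
      exact (hfA i).2 (Part.dom_iff_mem.2 ⟨u, by rwa [← hai] at hu⟩)
  -- membership in `W` from the approximation
  have hWin : ∀ (w t : ℕ) (x : Str × Str × Str),
      (evaln t cW w).isSome = true → Encodable.decode w = some x → x ∈ W := by
    intro w t x hsome hdec
    obtain ⟨y, hy⟩ := Option.isSome_iff_exists.1 hsome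
    obtain ⟨a, ha, u, hu, -⟩ := codeG2 hcW' w y t hy
    have : a = x := by rw [hdec] at ha; exact (Option.some_inj.1 ha).symm
    subst this
    exact (hfW a).2 (Part.dom_iff_mem.2 ⟨u, hu⟩)
  have hWout : ∀ x : Str × Str × Str, x ∈ W →
      ∃ t, (evaln t cW (Encodable.encode x)).isSome = true := by
    intro x hx
    obtain ⟨u, hu⟩ := Part.dom_iff_mem.1 ((hfW x).1 hx)
    obtain ⟨t, ht⟩ := codeG1 hcW' x u hu
    exact ⟨t, by simp [ht]⟩
  -- `U`-descriptions from the approximation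
  have hUin : ∀ (d t n : ℕ),
      evaln t cU d = some (Encodable.encode (zeros n)) →
      ∃ δ : Str, Encodable.decode (α := Str) d = some δ ∧
        List.replicate n false ∈ U δ := by
    intro d t n h
    obtain ⟨δ, hδdec, σ, hσ, hσe⟩ := codeG2 hcU' d _ t h
    have : σ = zeros n := Encodable.encode_injective hσe.symm
    subst this
    exact ⟨δ, hδdec, by rwa [zeros_eq] at hσ⟩
  have hUout : ∀ (τ₀ : Str) (n : ℕ), List.replicate n false ∈ U τ₀ →
      ∃ t, evaln t cU (Encodable.encode τ₀) = some (Encodable.encode (zeros n)) := by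
    intro τ₀ n h
    have := codeG1 hcU' τ₀ (List.replicate n false) h
    rwa [← zeros_eq] at this
  -- the Π⁰₂ presentation
  refine ⟨Rcheck cU cA cW c, (primrec_Rcheck cU cA cW c).to_comp, ?_⟩
  ext X
  simp only [Set.mem_setOf_eq]
  constructor
  · -- forward direction
    intro hX e
    set n := e.unpair.1.unpair.1 with hn
    set d := e.unpair.1.unpair.2 with hd
    set t := e.unpair.2.unpair.1 with ht
    set t' := e.unpair.2.unpair.2 with ht'
    by_cases hev : evaln t cU d = some (Encodable.encode (zeros n))
    · obtain ⟨δ, hδdec, hδ⟩ := hUin d t n hev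
      by_cases h2 : ∃ m, t' ≤ m ∧ abits cA m n ≠ abits cA t' n
      · obtain ⟨m, hm1, hm2⟩ := h2
        refine ⟨m, Rcheck_iff.2 (Or.inr (Or.inl ?_))⟩
        rw [seg_length]
        exact ⟨hm1, hm2⟩
      · push_neg at h2
        obtain ⟨T, hT⟩ := abits_settle cA A hAiff n
        have hsettle : abits cA t' n = seg A n := by
          have e1 := hT (max T t') (le_max_left _ _)
          have e2 := h2 (max T t') (le_max_right _ _)
          rw [← e2, e1]
        have hKN : KNum U n ≤ (δ.length : ℕ∞) := Kof_le_of_desc hδ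
        have hbound : KofO W X (seg A n) ≤ ((δ.length + c : ℕ) : ℕ∞) := by
          refine (hX n).trans ?_
          rw [Nat.cast_add]
          exact add_le_add hKN le_rfl
        obtain ⟨τ, hτdesc, hτlen⟩ := exists_desc_of_KofO_le hbound
        obtain ⟨ρ, hρ, hmemW⟩ := hτdesc
        obtain ⟨t₁, ht₁⟩ := hWout (ρ, τ, seg A n) hmemW
        set x : Str × Str × Str := (ρ, τ, seg A n) with hx
        set m := max (max t₁ (Encodable.encode x)) ρ.length with hmdef
        refine ⟨m, Rcheck_iff.2 (Or.inr (Or.inr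
          ⟨Encodable.encode x, ?_, ?_, x, Encodable.encodek x, ?_, ?_, ?_⟩))⟩
        · rw [seg_length]
          have : Encodable.encode x ≤ m :=
            le_trans (le_max_right _ _) (le_max_left _ _)
          omega
        · rw [seg_length]
          obtain ⟨y, hy⟩ := Option.isSome_iff_exists.1 ht₁
          have : y ∈ evaln m cW (Encodable.encode x) :=
            evaln_mono (le_trans (le_max_left _ _) (le_max_left _ _)) hy
          exact Option.isSome_iff_exists.2 ⟨y, this⟩
        · show ρ = takeStr (seg X m) ρ.length
          rw [takeStr_eq, seg_take X (le_max_right _ _ : ρ.length ≤ m)]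
          exact hρ
        · show seg A n = abits cA t' n
          exact hsettle.symm
        · show τ.length ≤ _ + c
          rw [hδdec]
          exact hτlen
    · exact ⟨0, Rcheck_iff.2 (Or.inl hev)⟩
  · -- backward direction
    intro hX n
    by_cases hfin : KNum U n = ⊤
    · rw [hfin]
      simp
    · obtain ⟨k, hk⟩ : ∃ k : ℕ, KNum U n = (k : ℕ∞) := by
        cases hKN : KNum U n with
        | top => exact absurd hKN hfin
        | coe k => exact ⟨k, rfl⟩
      have hsle : Kof U (List.replicate n false) ≤ (k : ℕ∞) := by
        rw [show Kof U (List.replicate n false) = KNum U n from rfl, hk]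
      obtain ⟨τ₀, hτ₀, hτ₀len⟩ := exists_desc_of_Kof_le hsle
      obtain ⟨t, hev⟩ := hUout τ₀ n hτ₀
      obtain ⟨T, hT⟩ := abits_settle cA A hAiff n
      obtain ⟨m, hm⟩ :=
        hX (Nat.pair (Nat.pair n (Encodable.encode τ₀)) (Nat.pair t T))
      rw [Rcheck_iff] at hm
      simp only [Nat.unpair_pair] at hm
      rcases hm with hm | hm | hm
      · exact absurd hev hm
      · obtain ⟨hTm, hne⟩ := hm
        rw [seg_length] at hTm hne
        exact absurd ((hT m hTm).trans (hT T le_rfl).symm) hne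
      · obtain ⟨w, hw, hsome, x, hdecw, hpref, hσ, hlen⟩ := hm
        obtain ⟨ρ, τ, σ⟩ := x
        have hxW : (ρ, τ, σ) ∈ W := hWin w (seg X m).length _ hsome hdecw
        have hagree : Agrees X ρ := by
          refine agrees_of_prefix (m := m) ?_
          have : ρ = (seg X m).take ρ.length := by
            simpa [takeStr_eq] using hpref
          rw [this]
          exact List.take_prefix _ _
        have hσA : σ = seg A n := by
          simpa [hT T le_rfl] using hσ
        have hdesc : OracleDescribes W X τ (seg A n) :=
          ⟨ρ, hagree, by rwa [hσA] at hxW⟩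
        have hlen' : τ.length ≤ τ₀.length + c := by
          simpa [Encodable.encodek] using hlen
        calc KofO W X (seg A n) ≤ (τ.length : ℕ∞) := KofO_le_of_desc hdesc
          _ ≤ ((k + c : ℕ) : ℕ∞) := by
              exact_mod_cast le_trans hlen' (by omega)
          _ = KNum U n + (c : ℕ∞) := by rw [Nat.cast_add, hk]

end KCE
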